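/- Let d ∈ ℕ, b ∈ ℝ^d, and let F : ℝ^d → ℝ be given by a finite Taylor-type expansion around b: F(x) = Σ_{κ ∈ A} a_κ · Π_{i=1}^d (x_i − b_i)^{κ_i}, where A ⊆ ℕ^d is finite and a_κ ∈ ℝ. For S ⊆ {1,…,d} define the baseline value function F_S^{(b)}(x) := F(y) where y_i = x_i for i ∈ S and y_i = b_i for i ∉ S, and define the b-fANOVA effect f_S^{(b)}(x) := Σ_{T ⊆ S} (-1)^{|S|-|T|} F_T^{(b)}(x). Then for every S and every x ∈ ℝ^d, f_S^{(b)}(x) = Σ_{κ ∈ A with supp(κ) = S} a_κ · Π_{i=1}^d (x_i − b_i)^{κ_i}, where supp(κ) := {i : κ_i > 0}. (Theorem 1: the b-fANOVA effect f_S^{(b)} equals the sum of exactly those Taylor interaction terms whose degree vector has support S.) -/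
import Mathlib


open Finset

/-- Theorem 1: for a function given by a finite Taylor-type expansion around a baseline `b`,
the b-fANOVA effect `f_S^{(b)}(x) = Σ_{T ⊆ S} (-1)^{|S|-|T|} F(x_T, b_{−T})` equals the sum
of exactly those Taylor interaction terms whose degree vector has support `S`. -/
theorem bfanova_effect_eq_taylor_interactions (d : ℕ) (b : Fin d → ℝ)
    (A : Finset (Fin d → ℕ)) (a : (Fin d → ℕ) → ℝ) (F : (Fin d → ℝ) → ℝ)
    (hF : ∀ x : Fin d → ℝ, F x = ∑ κ ∈ A, a κ * ∏ i, (x i - b i) ^ κ i)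
    (S : Finset (Fin d)) (x : Fin d → ℝ) :
    ∑ T ∈ S.powerset, (-1 : ℝ) ^ (S.card - T.card) *
        F (fun i => if i ∈ T then x i else b i) =
      ∑ κ ∈ A.filter (fun κ => Finset.univ.filter (fun i => 0 < κ i) = S),
        a κ * ∏ i, (x i - b i) ^ κ i := by
  have key : ∀ κ : Fin d → ℕ,
      ∑ T ∈ S.powerset, (-1:ℝ)^(S.card - T.card)
          * ∏ i, ((if i ∈ T then x i else b i) - b i)^κ i
        = if Finset.univ.filter (fun i => 0 < κ i) = S
            then ∏ i, (x i - b i)^κ i else 0 := by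
    intro κ
    set K := Finset.univ.filter (fun i => 0 < κ i) with hK
    set P := ∏ i, (x i - b i)^κ i with hP
    have hprod : ∀ T ∈ S.powerset,
        (∏ i, ((if i ∈ T then x i else b i) - b i)^κ i) = if K ⊆ T then P else 0 := by
      intro T _
      by_cases h : K ⊆ T
      · rw [if_pos h]
        refine Finset.prod_congr rfl fun i _ => ?_
        by_cases hi : i ∈ T
        · simp [hi]
        · have hz : κ i = 0 := by
            by_contra hne
            exact hi (h (by simp [hK, Nat.pos_of_ne_zero hne]))
          simp [hi, hz]
      · rw [if_neg h]
        obtain ⟨i, hiK, hiT⟩ := Finset.not_subset.mp h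
        refine Finset.prod_eq_zero (Finset.mem_univ i) ?_
        have hpos : 0 < κ i := by simpa [hK] using hiK
        simp [hiT, zero_pow hpos.ne']
    rw [Finset.sum_congr rfl fun T hT => by rw [hprod T hT]]
    have : ∑ T ∈ S.powerset, (-1:ℝ)^(S.card - T.card) * (if K ⊆ T then P else 0)
        = ∑ T ∈ S.powerset.filter (fun T => K ⊆ T), (-1:ℝ)^(S.card - T.card) * P := by
      rw [Finset.sum_filter]
      exact Finset.sum_congr rfl fun T _ => by split <;> simp
    rw [this]
    by_cases hKS : K ⊆ S
    · have hbij : ∑ T ∈ S.powerset.filter (fun T => K ⊆ T), (-1:ℝ)^(S.card - T.card) * P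
          = ∑ U ∈ (S \ K).powerset, (-1:ℝ)^((S \ K).card - U.card) * P := by
        refine Finset.sum_nbij' (fun T => T \ K) (fun U => U ∪ K) ?_ ?_ ?_ ?_ ?_
        · intro T hT
          simp only [Finset.mem_filter, Finset.mem_powerset] at hT ⊢
          exact Finset.sdiff_subset_sdiff hT.1 le_rfl
        · intro U hU
          simp only [Finset.mem_powerset] at hU
          simp only [Finset.mem_filter, Finset.mem_powerset]
          constructor
          · exact Finset.union_subset (hU.trans (Finset.sdiff_subset)) hKS
          · exact Finset.subset_union_right
        · intro T hT
          simp only [Finset.mem_filter, Finset.mem_powerset] at hT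
          show T \ K ∪ K = T
          rw [Finset.sdiff_union_of_subset hT.2]
        · intro U hU
          simp only [Finset.mem_powerset] at hU
          show (U ∪ K) \ K = U
          rw [Finset.union_sdiff_right]
          exact Finset.sdiff_eq_self_of_disjoint
            (Finset.disjoint_of_subset_left hU Finset.sdiff_disjoint)
        · intro T hT
          simp only [Finset.mem_filter, Finset.mem_powerset] at hT
          show (-1:ℝ)^(S.card - T.card) * P = (-1:ℝ)^((S \ K).card - (T \ K).card) * P
          congr 2
          have h1 : (T \ K).card + K.card = T.card :=
            Finset.card_sdiff_add_card_eq_card hT.2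
          have h2 : (S \ K).card + K.card = S.card :=
            Finset.card_sdiff_add_card_eq_card hKS
          have h3 : T.card ≤ S.card := Finset.card_le_card hT.1
          omega
      rw [hbij, ← Finset.sum_mul]
      have hsgn : ∀ U ∈ (S \ K).powerset,
          (-1:ℝ)^((S \ K).card - U.card) = (-1:ℝ)^((S \ K).card) * (-1:ℝ)^U.card := by
        intro U hU
        have h : U.card ≤ (S \ K).card := Finset.card_le_card (Finset.mem_powerset.mp hU)
        have h2 : ((-1:ℝ)^U.card) * ((-1:ℝ)^U.card) = 1 := by
          rw [← mul_pow]; norm_num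
        calc (-1:ℝ)^((S \ K).card - U.card)
            = (-1:ℝ)^((S \ K).card - U.card) * ((-1:ℝ)^U.card * (-1:ℝ)^U.card) := by
              rw [h2, mul_one]
          _ = ((-1:ℝ)^((S \ K).card - U.card) * (-1:ℝ)^U.card) * (-1:ℝ)^U.card := by ring
          _ = (-1:ℝ)^((S \ K).card) * (-1:ℝ)^U.card := by
              rw [← pow_add, Nat.sub_add_cancel h]
      have hzsum : (∑ U ∈ (S \ K).powerset, (-1:ℝ)^U.card)
          = if S \ K = ∅ then 1 else 0 := by
        have hz := Finset.sum_powerset_neg_one_pow_card (x := S \ K)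
        have hc : (∑ U ∈ (S \ K).powerset, (-1:ℝ)^U.card)
            = ((∑ U ∈ (S \ K).powerset, (-1:ℤ)^U.card : ℤ) : ℝ) := by
          push_cast; rfl
        rw [hc, hz]; split <;> simp
      rw [Finset.sum_congr rfl hsgn, ← Finset.mul_sum, hzsum]
      by_cases hEq : K = S
      · simp [hEq, if_pos rfl]
      · have hne : S \ K ≠ ∅ := by
          intro h
          exact hEq (Finset.Subset.antisymm hKS (by
            intro i hi
            by_contra hiK
            exact absurd (Finset.mem_sdiff.mpr ⟨hi, hiK⟩) (by simp [h])))
        simp [hne, hEq]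
    · have hfil : S.powerset.filter (fun T => K ⊆ T) = ∅ := by
        refine Finset.filter_eq_empty_iff.mpr fun T hT => ?_
        intro h
        exact hKS (h.trans (Finset.mem_powerset.mp hT))
      have hne : K ≠ S := fun h => hKS (h ▸ le_rfl)
      simp [hfil, hne]
  calc ∑ T ∈ S.powerset, (-1:ℝ)^(S.card - T.card) * F (fun i => if i ∈ T then x i else b i)
      = ∑ T ∈ S.powerset, ∑ κ ∈ A, a κ *
          ((-1:ℝ)^(S.card - T.card) * ∏ i, ((if i ∈ T then x i else b i) - b i)^κ i) := by
        refine Finset.sum_congr rfl fun T _ => ?_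
        rw [hF, Finset.mul_sum]
        exact Finset.sum_congr rfl fun κ _ => by ring
    _ = ∑ κ ∈ A, a κ * ∑ T ∈ S.powerset,
          (-1:ℝ)^(S.card - T.card) * ∏ i, ((if i ∈ T then x i else b i) - b i)^κ i := by
        rw [Finset.sum_comm]
        exact Finset.sum_congr rfl fun κ _ => by rw [Finset.mul_sum]
    _ = ∑ κ ∈ A.filter (fun κ => Finset.univ.filter (fun i => 0 < κ i) = S),
          a κ * ∏ i, (x i - b i) ^ κ i := by
        rw [Finset.sum_congr rfl fun κ _ => by rw [key κ], Finset.sum_filter]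
        exact Finset.sum_congr rfl fun κ _ => by split <;> simp
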